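/- Let n ≥ 1 and d ≥ 1, and let X₁, ..., Xₜ be reals with 0 ≤ Xᵢ ≤ n−1 for all i and Σᵢ Xᵢ ≤ n·d. Then ∏ᵢ (1 − Xᵢ/n) ≥ (1/n^{2d})·(1/4)^d. -/

import Mathlib

lemma endpoint_bound (m : ℝ) (hm : 2 ≤ m) :
    Real.exp (-((m - 1) / m * Real.log (4 * m ^ 2))) ≤ 1 / m := by
  have hm0 : (0:ℝ) < m := by linarith
  have h1m : (0:ℝ) < 1 / m := by positivity
  rw [← Real.le_log_iff_exp_le h1m]
  have hlogm : 0 ≤ Real.log m := Real.log_nonneg (by linarith)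
  have hlog4 : 0 ≤ Real.log 4 := Real.log_nonneg (by norm_num)
  have hlogeq : Real.log (4 * m ^ 2) = Real.log 4 + 2 * Real.log m := by
    rw [Real.log_mul (by norm_num) (by positivity), Real.log_pow]
    push_cast; ring
  rw [one_div, Real.log_inv, hlogeq, neg_le_neg_iff, div_mul_eq_mul_div,
    le_div_iff₀ hm0]
  nlinarith

lemma pointwise_bound (m x : ℝ) (hm : 2 ≤ m) (hx0 : 0 ≤ x) (hx1 : x ≤ m - 1) :
    Real.exp (-(x / m) * Real.log (4 * m ^ 2)) ≤ 1 - x / m := by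
  have hm0 : (0:ℝ) < m := by linarith
  set c : ℝ := Real.log (4 * m ^ 2) with hc
  set s : ℝ := x / (m - 1) with hs
  have hm1 : (0:ℝ) < m - 1 := by linarith
  have hs0 : 0 ≤ s := by positivity
  have hs1 : s ≤ 1 := by rw [hs, div_le_one hm1]; linarith
  have hconv := convexOn_exp.2 (Set.mem_univ (0:ℝ))
    (Set.mem_univ (-((m - 1) / m * c))) (by linarith : (0:ℝ) ≤ 1 - s) hs0
    (by ring)
  simp only [smul_eq_mul, Real.exp_zero, mul_zero, zero_add, mul_one] at hconv
  have hne1 : m - 1 ≠ 0 := ne_of_gt hm1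
  have hne0 : m ≠ 0 := ne_of_gt hm0
  have key : s * -((m - 1) / m * c) = -(x / m) * c := by
    rw [hs]; field_simp
  rw [key] at hconv
  refine hconv.trans ?_
  have hend := endpoint_bound m hm
  have h2 : s * Real.exp (-((m - 1) / m * c)) ≤ s * (1 / m) :=
    mul_le_mul_of_nonneg_left hend hs0
  have h3 : 1 - s + s * (1 / m) = 1 - x / m := by
    rw [hs]; field_simp; ring
  linarith

theorem prod_one_sub_lower_bound (n d t : ℕ) (hn : 1 ≤ n) (hd : 1 ≤ d)
    (X : Fin t → ℝ) (hX0 : ∀ i, 0 ≤ X i) (hX1 : ∀ i, X i ≤ (n : ℝ) - 1)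
    (hsum : ∑ i, X i ≤ (n : ℝ) * d) :
    (1 / (n : ℝ) ^ (2 * d)) * (1 / 4) ^ d ≤ ∏ i, (1 - X i / n) := by
  rcases eq_or_lt_of_le hn with h1 | h2
  · -- n = 1 : all X i = 0
    have hn1 : (n : ℝ) = 1 := by rw [← h1]; norm_num
    have hX : ∀ i, X i = 0 := fun i =>
      le_antisymm (by have := hX1 i; rw [hn1] at this; linarith) (hX0 i)
    have : ∏ i, (1 - X i / n) = 1 := by
      apply Finset.prod_eq_one; intro i _; rw [hX i]; simp
    rw [this, hn1]
    have h4 : ((1:ℝ) / 4) ^ d ≤ 1 := pow_le_one₀ (by norm_num) (by norm_num)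
    simpa using h4
  · have hn2 : (2:ℝ) ≤ (n:ℝ) := by exact_mod_cast h2
    have hn0 : (0:ℝ) < n := by linarith
    set c : ℝ := Real.log (4 * (n:ℝ) ^ 2) with hc
    have hc0 : 0 ≤ c := Real.log_nonneg (by nlinarith)
    have key : ∀ i : Fin t, Real.exp (-(X i / n) * c) ≤ 1 - X i / n :=
      fun i => pointwise_bound n (X i) hn2 (hX0 i) (hX1 i)
    have hprod : ∏ i, Real.exp (-(X i / n) * c) ≤ ∏ i, (1 - X i / n) :=
      Finset.prod_le_prod (fun i _ => (Real.exp_pos _).le) (fun i _ => key i)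
    rw [← Real.exp_sum] at hprod
    refine le_trans ?_ hprod
    have hS : ∑ i, -(X i / (n:ℝ)) * c = -((∑ i, X i) / n) * c := by
      rw [← Finset.sum_mul]
      congr 1
      rw [Finset.sum_div, ← Finset.sum_neg_distrib]
    rw [hS]
    have hmono : -((d:ℝ)) * c ≤ -((∑ i, X i) / n) * c := by
      apply mul_le_mul_of_nonneg_right _ hc0
      have : (∑ i, X i) / (n:ℝ) ≤ d := by
        rw [div_le_iff₀ hn0]; linarith [hsum]
      linarith
    refine le_trans (le_of_eq ?_) (Real.exp_le_exp.mpr hmono)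
    rw [show -((d:ℝ)) * c = -((d:ℝ) * c) by ring, Real.exp_neg, hc,
      ← Real.log_pow, Real.exp_log (by positivity)]
    rw [mul_pow, ← pow_mul]
    field_simp
    rw [← mul_pow]; norm_num
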